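/- Let S be a stacked 2-sphere and let α = abc and β = abd be two distinct triangles of S sharing the edge ab. Then the following are equivalent: (1) the nodes ᾱ and β̄ are adjacent in the dual tree Λ(S̄); (2) the link of the edge ab in S̄ is a path of length exactly two from c to d; (3) the edge ab is contained in exactly two tetrahedra of S̄; (4) the vertices a and b have exactly three common neighbours in the edge graph of S; (5) there exists a unique vertex e ∉ {c, d} such that ae and be are both edges of S. -/

import Mathlib

namespace PachnerSpheres

open Finset

/-- A triangulated 2-sphere on the vertex set `Fin n`, given by its set of
triangles: a pure 2-dimensional complex in which every edge lies in exactly two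
triangles, all vertex links are connected (hence cycles), the complex is
connected, and the Euler characteristic is 2. -/
structure Sphere2 (n : ℕ) where
  faces : Finset (Finset (Fin n))
  card_three : ∀ t ∈ faces, t.card = 3
  covers : ∀ v : Fin n, ∃ t ∈ faces, v ∈ t
  edge_two : ∀ t ∈ faces, ∀ e ⊆ t, e.card = 2 →
    (faces.filter fun t' => e ⊆ t').card = 2
  link_conn : ∀ v a b : Fin n,
    (∃ t ∈ faces, v ∈ t ∧ a ∈ t ∧ a ≠ v) →
    (∃ t ∈ faces, v ∈ t ∧ b ∈ t ∧ b ≠ v) →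
    Relation.ReflTransGen
      (fun x y : Fin n => x ≠ y ∧ ({v, x, y} : Finset (Fin n)) ∈ faces) a b
  conn : ∀ a b : Fin n,
    Relation.ReflTransGen
      (fun x y : Fin n => x ≠ y ∧ ∃ t ∈ faces, x ∈ t ∧ y ∈ t) a b
  euler : n + faces.card = (faces.biUnion fun t => t.powersetCard 2).card + 2

variable {n : ℕ}

namespace Sphere2

/-- The edges of a triangulated 2-sphere. -/
def edges (S : Sphere2 n) : Finset (Finset (Fin n)) :=
  S.faces.biUnion fun t => t.powersetCard 2

/-- `u` and `v` are joined by an edge of `S`. -/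
def HasEdge (S : Sphere2 n) (u v : Fin n) : Prop :=
  u ≠ v ∧ ({u, v} : Finset (Fin n)) ∈ S.edges

instance (S : Sphere2 n) : DecidableRel S.HasEdge := fun u v =>
  decidable_of_iff (u ≠ v ∧ ({u, v} : Finset (Fin n)) ∈ S.edges) Iff.rfl

/-- The degree of a vertex: the number of edges containing it. -/
def degree (S : Sphere2 n) (v : Fin n) : ℕ :=
  (S.edges.filter fun e => v ∈ e).card

/-- Combinatorial isomorphism of triangulated 2-spheres. -/
def Iso (S T : Sphere2 n) : Prop :=
  ∃ σ : Equiv.Perm (Fin n), T.faces = S.faces.image (Finset.image σ)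

end Sphere2

/-- The face set obtained from `F` by the edge flip `ab ↦ cd`. -/
def flipFaces (F : Finset (Finset (Fin n))) (a b c d : Fin n) :
    Finset (Finset (Fin n)) :=
  (F \ {{a, b, c}, {a, b, d}}) ∪ {{a, c, d}, {b, c, d}}

/-- `IsFlipOf S T a b c d` : `T` is obtained from `S` by the (admissible)
edge flip `ab ↦ cd`. -/
def IsFlipOf (S T : Sphere2 n) (a b c d : Fin n) : Prop :=
  c ≠ d ∧ ({a, b, c} : Finset (Fin n)) ∈ S.faces ∧
    ({a, b, d} : Finset (Fin n)) ∈ S.faces ∧ ¬ S.HasEdge c d ∧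
    T.faces = flipFaces S.faces a b c d

/-- `T` is obtained from `S` by a single edge flip. -/
def Flip (S T : Sphere2 n) : Prop := ∃ a b c d : Fin n, IsFlipOf S T a b c d

/-- A flag 2-sphere: distinct from the boundary of the tetrahedron (which is the
only triangulated 2-sphere with at most 4 vertices) and every 3-cycle of the
edge graph bounds a triangle. -/
def IsFlag (S : Sphere2 n) : Prop :=
  4 < n ∧ ∀ a b c : Fin n, S.HasEdge a b → S.HasEdge b c → S.HasEdge a c →
    ({a, b, c} : Finset (Fin n)) ∈ S.faces

/-- `S` is (isomorphic to) the double cone `Γ_n`: there are two non-adjacent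
vertices such that every triangle contains one of them. -/
def IsDoubleCone (S : Sphere2 n) : Prop :=
  ∃ v w : Fin n, v ≠ w ∧ ¬ S.HasEdge v w ∧ ∀ t ∈ S.faces, v ∈ t ∨ w ∈ t

/-- One step in the Pachner graph of `n`-vertex flag 2-spheres: an edge flip
between flag 2-spheres (in either direction), or a combinatorial isomorphism
(nodes are isomorphism classes). -/
def FlagStep (S T : Sphere2 n) : Prop :=
  IsFlag S ∧ IsFlag T ∧ (Flip S T ∨ Flip T S ∨ Sphere2.Iso S T)

/-- `S ∼ T` : `S` and `T` are connected in the Pachner graph of `n`-vertex flag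
2-spheres, i.e. joined by a sequence of edge flips all whose intermediate
triangulations are `n`-vertex flag 2-spheres. -/
def FlagConn (S T : Sphere2 n) : Prop := Relation.ReflTransGen FlagStep S T

/-! ### Quadrilaterals in triangulated 2-spheres -/

/-- The boundary edges of a subcomplex `Q` (given by a set of triangles):
the edges lying in exactly one triangle of `Q`. -/
def bdryEdges (Q : Finset (Finset (Fin n))) : Finset (Finset (Fin n)) :=
  (Q.biUnion fun t => t.powersetCard 2).filter fun e =>
    (Q.filter fun t => e ⊆ t).card = 1

/-- The edge set of the 4-cycle `a-b-c-d-a`. -/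
def quadCycle (a b c d : Fin n) : Finset (Finset (Fin n)) :=
  {{a, b}, {b, c}, {c, d}, {d, a}}

/-- `Q` is a quadrilateral in `T` with boundary 4-cycle `a-b-c-d-a`: a
subcomplex of `T` which is a triangulated disc whose boundary is the 4-cycle
`a-b-c-d-a` (connected, with boundary edges exactly the 4-cycle). -/
def IsQuad (T : Sphere2 n) (Q : Finset (Finset (Fin n))) (a b c d : Fin n) :
    Prop :=
  Q ⊆ T.faces ∧ Q.Nonempty ∧ [a, b, c, d].Pairwise (· ≠ ·) ∧
  bdryEdges Q = quadCycle a b c d ∧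
  ∀ s ∈ Q, ∀ t ∈ Q,
    Relation.ReflTransGen
      (fun x y : Finset (Fin n) => x ∈ Q ∧ y ∈ Q ∧ (x ∩ y).card = 2) s t

/-- The interior vertices of a quadrilateral with boundary vertices
`a, b, c, d`. -/
def quadInterior (Q : Finset (Finset (Fin n))) (a b c d : Fin n) :
    Finset (Fin n) :=
  Q.biUnion id \ {a, b, c, d}

/-- An ordered quadrilateral: it has interior vertices, and all interior
vertices have degree four (in the ambient sphere). -/
def IsOrderedQuad (T : Sphere2 n) (Q : Finset (Finset (Fin n)))
    (a b c d : Fin n) : Prop :=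
  IsQuad T Q a b c d ∧ (quadInterior Q a b c d).Nonempty ∧
    ∀ v ∈ quadInterior Q a b c d, T.degree v = 4

/-- A proper quadrilateral: its boundary 4-cycle `a-b-c-d-a` is induced in `T`
and all four boundary vertices have degree at least five. -/
def IsProperQuad (T : Sphere2 n) (Q : Finset (Finset (Fin n)))
    (a b c d : Fin n) : Prop :=
  IsQuad T Q a b c d ∧ ¬ T.HasEdge a c ∧ ¬ T.HasEdge b d ∧
    5 ≤ T.degree a ∧ 5 ≤ T.degree b ∧ 5 ≤ T.degree c ∧ 5 ≤ T.degree d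

/-- The diagonal path of the ordered quadrilateral `Q` has an endpoint at the
boundary vertex `v`: exactly one interior vertex of `Q` is adjacent to `v`. -/
def DiagEndAt (T : Sphere2 n) (Q : Finset (Finset (Fin n))) (a b c d : Fin n)
    (v : Fin n) : Prop :=
  v ∈ ({a, b, c, d} : Finset (Fin n)) ∧
    ∃! u : Fin n, u ∈ quadInterior Q a b c d ∧ T.HasEdge v u

/-! ### Stacked 3-balls and stacked 2-spheres -/

/-- A stacked 3-ball, given by its set of tetrahedra: obtained from a single
tetrahedron by repeatedly gluing a new tetrahedron (with a fresh apex) onto a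
boundary triangle. -/
inductive IsStackedBall : Finset (Finset (Fin n)) → Prop
  | single (t : Finset (Fin n)) (ht : t.card = 4) : IsStackedBall {t}
  | glue (B : Finset (Finset (Fin n))) (t : Finset (Fin n)) (x : Fin n)
      (hB : IsStackedBall B) (ht : t.card = 3)
      (hbd : (B.filter fun τ => t ⊆ τ).card = 1)
      (hx : ∀ τ ∈ B, x ∉ τ) :
      IsStackedBall (insert (insert x t) B)

/-- The boundary triangles of a complex `B` given by a set of tetrahedra:
the triangles lying in exactly one tetrahedron of `B`. -/
def bdry (B : Finset (Finset (Fin n))) : Finset (Finset (Fin n)) :=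
  (B.biUnion fun τ => τ.powersetCard 3).filter fun s =>
    (B.filter fun τ => s ⊆ τ).card = 1

/-- A stacked 2-sphere: a triangulated 2-sphere which is the boundary of a
stacked 3-ball. -/
def IsStacked (S : Sphere2 n) : Prop :=
  ∃ B : Finset (Finset (Fin n)), IsStackedBall B ∧ S.faces = bdry B

/-- The degree of the node `σ` in the dual graph `Λ(B)` of `B`: the number of
tetrahedra of `B` sharing a triangle with `σ`. -/
def dualDeg (B : Finset (Finset (Fin n))) (σ : Finset (Fin n)) : ℕ :=
  (B.filter fun τ => τ ≠ σ ∧ (τ ∩ σ).card = 3).card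

/-- One step in the Pachner graph `𝓢_n` of `n`-vertex stacked 2-spheres. -/
def StackedStep (S T : Sphere2 n) : Prop :=
  IsStacked S ∧ IsStacked T ∧ (Flip S T ∨ Flip T S ∨ Sphere2.Iso S T)

/-- Connectivity in the Pachner graph `𝓢_n` of `n`-vertex stacked 2-spheres. -/
def StackedConn (S T : Sphere2 n) : Prop := Relation.ReflTransGen StackedStep S T

/-- One step in the dual graph `Λ(B)` with the node `σ` deleted. -/
def DualStepAvoiding (B : Finset (Finset (Fin n))) (σ : Finset (Fin n))
    (x y : Finset (Fin n)) : Prop :=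
  x ∈ B ∧ y ∈ B ∧ x ≠ σ ∧ y ≠ σ ∧ x ≠ y ∧ (x ∩ y).card = 3

/-- Reachability in the dual graph `Λ(B)` with the node `σ` deleted. -/
def DualReachAvoiding (B : Finset (Finset (Fin n))) (σ x y : Finset (Fin n)) :
    Prop :=
  Relation.ReflTransGen (DualStepAvoiding B σ) x y

/-- One step (adjacency) in the dual graph `Λ(B)`. -/
def DualStep (B : Finset (Finset (Fin n))) (x y : Finset (Fin n)) : Prop :=
  x ∈ B ∧ y ∈ B ∧ x ≠ y ∧ (x ∩ y).card = 3

/-- The dual graph `Λ(B)` is a path: connected, all degrees at most two, and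
some node of degree at most one. -/
def DualIsPath (B : Finset (Finset (Fin n))) : Prop :=
  (∀ σ ∈ B, dualDeg B σ ≤ 2) ∧
  (∀ σ ∈ B, ∀ τ ∈ B, Relation.ReflTransGen (DualStep B) σ τ) ∧
  (∃ σ ∈ B, dualDeg B σ ≤ 1)

/-- `S` belongs to `𝓢ₙ⁰`: `S` is a stacked 2-sphere whose (unique) stacked
3-ball has a dual graph with no node of degree four. -/
def NoDeg4 (S : Sphere2 n) : Prop :=
  IsStacked S ∧ ∀ B : Finset (Finset (Fin n)), IsStackedBall B →
    S.faces = bdry B → ∀ σ ∈ B, dualDeg B σ ≠ 4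

/-- One step in the Pachner graph `𝓢ₙ⁰`. -/
def Step0 (S T : Sphere2 n) : Prop :=
  NoDeg4 S ∧ NoDeg4 T ∧ (Flip S T ∨ Flip T S ∨ Sphere2.Iso S T)

/-- Reachability between vertices in the subcomplex of `B` induced on the
vertices outside `t`. -/
def inducedReach (B : Finset (Finset (Fin n))) (t : Finset (Fin n))
    (x y : Fin n) : Prop :=
  Relation.ReflTransGen
    (fun u v : Fin n => u ≠ v ∧ u ∉ t ∧ v ∉ t ∧ ∃ τ ∈ B, u ∈ τ ∧ v ∈ τ) x y

/-- The tetrahedra of the clique complex of the edge graph of `S`: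
all 4-cliques of the edge graph. -/
def cliqueTets (S : Sphere2 n) : Finset (Finset (Fin n)) :=
  (Finset.univ.powersetCard 4).filter fun τ =>
    ∀ u ∈ τ, ∀ v ∈ τ, u ≠ v → S.HasEdge u v

/-! ### Trees with maximum node-degree four, and counting components -/

/-- Trees on `m` nodes with all node-degrees at most four. -/
abbrev DegLe4Tree (m : ℕ) : Type :=
  {G : SimpleGraph (Fin m) // G.IsTree ∧ ∀ v, (G.neighborSet v).ncard ≤ 4}

/-- Trees up to graph isomorphism. -/
def treeSetoid (m : ℕ) : Setoid (DegLe4Tree m) :=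
  Relation.EqvGen.setoid fun G H => Nonempty (G.1 ≃g H.1)

/-- `t(m)`: the number of isomorphism classes of trees on `m` nodes with
maximum node-degree at most four. -/
noncomputable def numDeg4Trees (m : ℕ) : ℕ := Nat.card (Quotient (treeSetoid m))

/-- Stacked 2-spheres modulo connectivity in the Pachner graph `𝓢_n`
(nodes of `𝓢_n` are isomorphism classes, arcs are edge flips). -/
def stackedSetoid (n : ℕ) : Setoid {S : Sphere2 n // IsStacked S} :=
  Relation.EqvGen.setoid fun S T => Flip S.1 T.1 ∨ Sphere2.Iso S.1 T.1

/-- The number of connected components of the Pachner graph `𝓢_n` of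
`n`-vertex stacked 2-spheres. -/
noncomputable def numStackedComponents (n : ℕ) : ℕ := Nat.card (Quotient (stackedSetoid n))


/-! ### Auxiliary definitions and lemmas for Statement 10 -/

/-- Number of tetrahedra of `B` containing `s`. -/
def mult (B : Finset (Finset (Fin n))) (s : Finset (Fin n)) : ℕ :=
  (B.filter fun τ => s ⊆ τ).card

/-- Vertices of the link of `e` in `B`. -/
def linkV (B : Finset (Finset (Fin n))) (e : Finset (Fin n)) : Finset (Fin n) :=
  Finset.univ.filter fun x => x ∉ e ∧ ∃ τ ∈ B, insert x e ⊆ τ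

/-- Adjacency in the link of `e` in `B`. -/
def linkRel (B : Finset (Finset (Fin n))) (e : Finset (Fin n)) (x y : Fin n) : Prop :=
  x ≠ y ∧ x ∉ e ∧ y ∉ e ∧ ∃ τ ∈ B, insert x (insert y e) ⊆ τ

lemma IsStackedBall.card4 {B : Finset (Finset (Fin n))} (hB : IsStackedBall B) :
    ∀ τ ∈ B, τ.card = 4 := by
  induction hB with
  | single t ht => intro τ hτ; simp only [Finset.mem_singleton] at hτ; subst hτ; exact ht
  | glue B t x hB' ht hbd hx ih =>
      intro τ hτ
      rcases Finset.mem_insert.1 hτ with rfl | hτ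
      · obtain ⟨τ₁, hτ₁⟩ := Finset.card_pos.1 (by rw [hbd]; norm_num)
        rw [Finset.mem_filter] at hτ₁
        have hxt : x ∉ t := fun hxt => hx τ₁ hτ₁.1 (hτ₁.2 hxt)
        rw [Finset.card_insert_of_notMem hxt, ht]
      · exact ih τ hτ

lemma IsStackedBall.clique3 {B : Finset (Finset (Fin n))} (hB : IsStackedBall B) :
    ∀ u v w : Fin n, (∃ τ ∈ B, u ∈ τ ∧ v ∈ τ) → (∃ τ ∈ B, u ∈ τ ∧ w ∈ τ) →
      (∃ τ ∈ B, v ∈ τ ∧ w ∈ τ) → ∃ τ ∈ B, u ∈ τ ∧ v ∈ τ ∧ w ∈ τ := by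
  induction hB with
  | single t ht =>
      intro u v w h1 h2 h3
      simp only [Finset.mem_singleton, exists_eq_left] at h1 h2 h3 ⊢
      exact ⟨h1.1, h1.2, h2.2⟩
  | glue B t x hB' ht hbd hx ih =>
      obtain ⟨τ₁, hτ₁⟩ := Finset.card_pos.1 (by rw [hbd]; norm_num)
      rw [Finset.mem_filter] at hτ₁
      -- any pair inside `insert x t` avoiding x lies in τ₁ ∈ B
      have key : ∀ u v : Fin n, (∃ τ ∈ insert (insert x t) B, u ∈ τ ∧ v ∈ τ) →
          u ≠ x → v ≠ x → ∃ τ ∈ B, u ∈ τ ∧ v ∈ τ := by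
        rintro u v ⟨τ, hτ, hu, hv⟩ hux hvx
        rcases Finset.mem_insert.1 hτ with rfl | hτ
        · exact ⟨τ₁, hτ₁.1, hτ₁.2 ((Finset.mem_insert.1 hu).resolve_left hux),
            hτ₁.2 ((Finset.mem_insert.1 hv).resolve_left hvx)⟩
        · exact ⟨τ, hτ, hu, hv⟩
      have memx : ∀ u : Fin n, (∃ τ ∈ insert (insert x t) B, x ∈ τ ∧ u ∈ τ) →
          u ∈ insert x t := by
        rintro u ⟨τ, hτ, hxτ, hu⟩
        rcases Finset.mem_insert.1 hτ with rfl | hτ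
        · exact hu
        · exact absurd hxτ (hx τ hτ)
      intro u v w h1 h2 h3
      by_cases hux : u = x
      · subst hux
        exact ⟨insert u t, Finset.mem_insert_self _ _, Finset.mem_insert_self _ _,
          memx v h1, memx w h2⟩
      by_cases hvx : v = x
      · subst hvx
        refine ⟨insert v t, Finset.mem_insert_self _ _, ?_, Finset.mem_insert_self _ _, ?_⟩
        · exact memx u (by obtain ⟨τ, hτ, h⟩ := h1; exact ⟨τ, hτ, h.2, h.1⟩)
        · exact memx w h3
      by_cases hwx : w = x
      · subst hwx
        refine ⟨insert w t, Finset.mem_insert_self _ _, ?_, ?_, Finset.mem_insert_self _ _⟩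
        · exact memx u (by obtain ⟨τ, hτ, h⟩ := h2; exact ⟨τ, hτ, h.2, h.1⟩)
        · exact memx v (by obtain ⟨τ, hτ, h⟩ := h3; exact ⟨τ, hτ, h.2, h.1⟩)
      obtain ⟨τ, hτ, h⟩ := ih u v w (key u v h1 hux hvx) (key u w h2 hux hwx)
        (key v w h3 hvx hwx)
      exact ⟨τ, Finset.mem_insert_of_mem hτ, h⟩

lemma linkRel_symm {B : Finset (Finset (Fin n))} {e : Finset (Fin n)} {x y : Fin n}
    (h : linkRel B e x y) : linkRel B e y x := by
  obtain ⟨h1, h2, h3, τ, hτ, hsub⟩ := h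
  exact ⟨h1.symm, h3, h2, τ, hτ, by rwa [Finset.insert_comm]⟩

/-- The structure of the link of an edge `e` in a stacked ball `B`:
two endpoints `p`, `q` whose link triangles are boundary, all other link
triangles interior, the number of link vertices is one more than the number of
tetrahedra containing `e`, and the link is connected. -/
structure LinkData (B : Finset (Finset (Fin n))) (e : Finset (Fin n)) (p q : Fin n) : Prop where
  hpq : p ≠ q
  hpe : p ∉ e
  hqe : q ∉ e
  hp1 : mult B (insert p e) = 1
  hq1 : mult B (insert q e) = 1
  hother : ∀ w, w ∉ e → w ≠ p → w ≠ q → mult B (insert w e) = 0 ∨ mult B (insert w e) = 2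
  hcard : (linkV B e).card = (B.filter fun τ => e ⊆ τ).card + 1
  hconn : ∀ x ∈ linkV B e, ∀ y ∈ linkV B e, Relation.ReflTransGen (linkRel B e) x y

lemma LinkData.swap {B : Finset (Finset (Fin n))} {e : Finset (Fin n)} {p q : Fin n}
    (h : LinkData B e p q) : LinkData B e q p :=
  ⟨h.hpq.symm, h.hqe, h.hpe, h.hq1, h.hp1,
    fun w hw h1 h2 => h.hother w hw h2 h1, h.hcard, h.hconn⟩

lemma mult_insert_of_not_subset {B : Finset (Finset (Fin n))} {s τ₀ : Finset (Fin n)}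
    (h : ¬ s ⊆ τ₀) : mult (insert τ₀ B) s = mult B s := by
  unfold mult; rw [Finset.filter_insert, if_neg h]

lemma mult_insert_of_subset {B : Finset (Finset (Fin n))} {s τ₀ : Finset (Fin n)}
    (hτ₀ : τ₀ ∉ B) (h : s ⊆ τ₀) : mult (insert τ₀ B) s = mult B s + 1 := by
  unfold mult
  rw [Finset.filter_insert, if_pos h,
    Finset.card_insert_of_notMem (fun hc => hτ₀ (Finset.mem_filter.1 hc).1)]

/-- Link data when exactly one tetrahedron of `B` contains `e`. -/
lemma single_tet_link {B : Finset (Finset (Fin n))} {e τ₀ : Finset (Fin n)} {r s : Fin n}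
    (hmem : τ₀ ∈ B) (hfilter : ∀ τ ∈ B, e ⊆ τ → τ = τ₀) (hesub : e ⊆ τ₀)
    (hrs : τ₀ \ e = {r, s}) (hr : r ≠ s) : LinkData B e r s := by
  have hre : r ∉ e := by
    have : r ∈ τ₀ \ e := by rw [hrs]; simp
    exact (Finset.mem_sdiff.1 this).2
  have hse : s ∉ e := by
    have : s ∈ τ₀ \ e := by rw [hrs]; simp
    exact (Finset.mem_sdiff.1 this).2
  have hmemτ : ∀ y : Fin n, y ∉ e → (y ∈ τ₀ ↔ y = r ∨ y = s) := by
    intro y hy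
    constructor
    · intro hyτ
      have : y ∈ τ₀ \ e := Finset.mem_sdiff.2 ⟨hyτ, hy⟩
      rw [hrs] at this; simpa using this
    · rintro (rfl | rfl)
      · have : y ∈ τ₀ \ e := by rw [hrs]; simp
        exact (Finset.mem_sdiff.1 this).1
      · have : y ∈ τ₀ \ e := by rw [hrs]; simp
        exact (Finset.mem_sdiff.1 this).1
  have hmult1 : ∀ y : Fin n, y ∉ e → y ∈ τ₀ → mult B (insert y e) = 1 := by
    intro y hy hyτ
    have : B.filter (fun τ => insert y e ⊆ τ) = {τ₀} := by
      apply Finset.eq_singleton_iff_unique_mem.2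
      refine ⟨Finset.mem_filter.2 ⟨hmem, Finset.insert_subset hyτ hesub⟩, ?_⟩
      intro τ hτ
      rw [Finset.mem_filter] at hτ
      exact hfilter τ hτ.1 ((Finset.subset_insert _ _).trans hτ.2)
    unfold mult; rw [this]; simp
  have hfe : B.filter (fun τ => e ⊆ τ) = {τ₀} := by
    apply Finset.eq_singleton_iff_unique_mem.2
    refine ⟨Finset.mem_filter.2 ⟨hmem, hesub⟩, ?_⟩
    intro τ hτ
    rw [Finset.mem_filter] at hτ
    exact hfilter τ hτ.1 hτ.2
  have hlv : linkV B e = {r, s} := by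
    ext y
    simp only [linkV, Finset.mem_filter, Finset.mem_univ, true_and, Finset.mem_insert,
      Finset.mem_singleton]
    constructor
    · rintro ⟨hy, τ, hτ, hsub⟩
      have := hfilter τ hτ ((Finset.subset_insert _ _).trans hsub)
      subst this
      exact (hmemτ y hy).1 (hsub (Finset.mem_insert_self _ _))
    · rintro (rfl | rfl)
      · exact ⟨hre, τ₀, hmem, Finset.insert_subset ((hmemτ y hre).2 (Or.inl rfl)) hesub⟩
      · exact ⟨hse, τ₀, hmem, Finset.insert_subset ((hmemτ y hse).2 (Or.inr rfl)) hesub⟩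
  have hstep : linkRel B e r s :=
    ⟨hr, hre, hse, τ₀, hmem, by
      refine Finset.insert_subset ((hmemτ r hre).2 (Or.inl rfl)) ?_
      exact Finset.insert_subset ((hmemτ s hse).2 (Or.inr rfl)) hesub⟩
  refine ⟨hr, hre, hse, hmult1 r hre ((hmemτ r hre).2 (Or.inl rfl)),
    hmult1 s hse ((hmemτ s hse).2 (Or.inr rfl)), ?_, ?_, ?_⟩
  · intro w hw hwr hws
    left
    unfold mult
    rw [Finset.card_eq_zero, Finset.filter_eq_empty_iff]
    intro τ hτ hsub
    have := hfilter τ hτ ((Finset.subset_insert _ _).trans hsub)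
    subst this
    exact absurd ((hmemτ w hw).1 (hsub (Finset.mem_insert_self _ _))) (by simp [hwr, hws])
  · rw [hlv, hfe]
    rw [Finset.card_insert_of_notMem (by simpa using hr), Finset.card_singleton,
      Finset.card_singleton]
  · intro x hx y hy
    rw [hlv] at hx hy
    simp only [Finset.mem_insert, Finset.mem_singleton] at hx hy
    rcases hx with rfl | rfl <;> rcases hy with rfl | rfl
    · exact Relation.ReflTransGen.refl
    · exact Relation.ReflTransGen.single hstep
    · exact Relation.ReflTransGen.single (linkRel_symm hstep)
    · exact Relation.ReflTransGen.refl

/-- Transferring link data when the glued tetrahedron does not contain `e`. -/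
lemma LinkData.transfer {B : Finset (Finset (Fin n))} {e τ₀ : Finset (Fin n)} {p q : Fin n}
    (hnsub : ¬ e ⊆ τ₀) (h : LinkData B e p q) : LinkData (insert τ₀ B) e p q := by
  have hm : ∀ s : Finset (Fin n), e ⊆ s → mult (insert τ₀ B) s = mult B s := by
    intro s hs
    exact mult_insert_of_not_subset (fun hc => hnsub (hs.trans hc))
  have hlv : linkV (insert τ₀ B) e = linkV B e := by
    ext y
    simp only [linkV, Finset.mem_filter, Finset.mem_univ, true_and]
    constructor
    · rintro ⟨hy, τ, hτ, hsub⟩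
      rcases Finset.mem_insert.1 hτ with rfl | hτ
      · exact absurd ((Finset.subset_insert _ _).trans hsub) hnsub
      · exact ⟨hy, τ, hτ, hsub⟩
    · rintro ⟨hy, τ, hτ, hsub⟩
      exact ⟨hy, τ, Finset.mem_insert_of_mem hτ, hsub⟩
  have hrel : ∀ x y : Fin n, linkRel (insert τ₀ B) e x y ↔ linkRel B e x y := by
    intro x y
    constructor
    · rintro ⟨h1, h2, h3, τ, hτ, hsub⟩
      rcases Finset.mem_insert.1 hτ with rfl | hτ
      · exact absurd (((Finset.subset_insert _ _).trans
          ((Finset.subset_insert _ _).trans hsub))) hnsub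
      · exact ⟨h1, h2, h3, τ, hτ, hsub⟩
    · rintro ⟨h1, h2, h3, τ, hτ, hsub⟩
      exact ⟨h1, h2, h3, τ, Finset.mem_insert_of_mem hτ, hsub⟩
  have hff : (insert τ₀ B).filter (fun τ => e ⊆ τ) = B.filter (fun τ => e ⊆ τ) := by
    rw [Finset.filter_insert, if_neg hnsub]
  refine ⟨h.hpq, h.hpe, h.hqe, ?_, ?_, ?_, ?_, ?_⟩
  · rw [hm _ (Finset.subset_insert _ _)]; exact h.hp1
  · rw [hm _ (Finset.subset_insert _ _)]; exact h.hq1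
  · intro w hw h1 h2
    rw [hm _ (Finset.subset_insert _ _)]
    exact h.hother w hw h1 h2
  · rw [hlv, hff]; exact h.hcard
  · intro x hx y hy
    rw [hlv] at hx hy
    exact (h.hconn x hx y hy).lift id (fun a b hab => (hrel a b).2 hab)

/-- Extending link data when gluing a fresh tetrahedron over a boundary triangle
`t = insert w e` whose third vertex `w` is an endpoint of the link of `e`. -/
lemma LinkData.glue {B : Finset (Finset (Fin n))} {e : Finset (Fin n)} {x w q : Fin n}
    (hx : ∀ τ ∈ B, x ∉ τ)
    (hwe : w ∉ e)
    (hτ₁ : ∃ τ ∈ B, insert w e ⊆ τ)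
    (hD : LinkData B e w q) :
    LinkData (insert (insert x (insert w e)) B) e x q := by
  obtain ⟨τ₁, hτ₁B, hτ₁sub⟩ := hτ₁
  set τ₀ : Finset (Fin n) := insert x (insert w e) with hτ₀def
  have hxe : x ∉ e := fun hc => hx τ₁ hτ₁B (hτ₁sub (Finset.mem_insert_of_mem hc))
  have hxw : x ≠ w := fun hc => hx τ₁ hτ₁B (hc ▸ hτ₁sub (Finset.mem_insert_self _ _))
  have hτ₀B : τ₀ ∉ B := fun hc => hx τ₀ hc (Finset.mem_insert_self _ _)
  have hqex : ∃ τ ∈ B, q ∈ τ := by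
    have := hD.hq1
    unfold mult at this
    obtain ⟨τ, hτ⟩ := Finset.card_pos.1 (by rw [this]; norm_num)
    rw [Finset.mem_filter] at hτ
    exact ⟨τ, hτ.1, hτ.2 (Finset.mem_insert_self _ _)⟩
  have hxq : x ≠ q := by
    obtain ⟨τ, hτ, hqτ⟩ := hqex
    exact fun hc => hx τ hτ (hc ▸ hqτ)
  have hmemτ₀ : ∀ y : Fin n, y ∉ e → (y ∈ τ₀ ↔ y = x ∨ y = w) := by
    intro y hy
    simp only [hτ₀def, Finset.mem_insert]
    tauto
  have hesubτ₀ : e ⊆ τ₀ :=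
    (Finset.subset_insert _ _).trans (Finset.subset_insert _ _)
  have hwlv : w ∈ linkV B e := by
    simp only [linkV, Finset.mem_filter, Finset.mem_univ, true_and]
    exact ⟨hwe, τ₁, hτ₁B, hτ₁sub⟩
  have hxlv : x ∉ linkV B e := by
    simp only [linkV, Finset.mem_filter, Finset.mem_univ, true_and]
    rintro ⟨-, τ, hτ, hsub⟩
    exact hx τ hτ (hsub (Finset.mem_insert_self _ _))
  have hlv : linkV (insert τ₀ B) e = insert x (linkV B e) := by
    ext y
    simp only [linkV, Finset.mem_filter, Finset.mem_univ, true_and, Finset.mem_insert]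
    constructor
    · rintro ⟨hy, τ, hτ, hsub⟩
      rcases hτ with rfl | hτ
      · rcases (hmemτ₀ y hy).1 (hsub (Finset.mem_insert_self _ _)) with h | h
        · exact Or.inl h
        · exact Or.inr ⟨hy, τ₁, hτ₁B, by rw [h]; exact hτ₁sub⟩
      · exact Or.inr ⟨hy, τ, hτ, hsub⟩
    · intro hy'
      rcases hy' with h | ⟨hy, τ, hτ, hsub⟩
      · refine ⟨by rw [h]; exact hxe, τ₀, Or.inl rfl, ?_⟩
        rw [h]
        exact Finset.insert_subset (Finset.mem_insert_self _ _) hesubτ₀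
      · exact ⟨hy, τ, Or.inr hτ, hsub⟩
  have hstepxw : linkRel (insert τ₀ B) e x w :=
    ⟨hxw, hxe, hwe, τ₀, Finset.mem_insert_self _ _, le_refl _⟩
  refine ⟨hxq, hxe, hD.hqe, ?_, ?_, ?_, ?_, ?_⟩
  · rw [mult_insert_of_subset hτ₀B
      (Finset.insert_subset (Finset.mem_insert_self _ _) hesubτ₀)]
    have : mult B (insert x e) = 0 := by
      unfold mult
      rw [Finset.card_eq_zero, Finset.filter_eq_empty_iff]
      intro τ hτ hsub
      exact hx τ hτ (hsub (Finset.mem_insert_self _ _))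
    rw [this]
  · rw [mult_insert_of_not_subset, hD.hq1]
    intro hc
    have : q ∈ τ₀ := hc (Finset.mem_insert_self _ _)
    rcases (hmemτ₀ q hD.hqe).1 this with rfl | rfl
    · exact hxq rfl
    · exact hD.hpq rfl
  · intro w' hw' hw'x hw'q
    by_cases hw'w : w' = w
    · subst hw'w
      right
      rw [mult_insert_of_subset hτ₀B
        (Finset.insert_subset ((hmemτ₀ w' hw').2 (Or.inr rfl)) hesubτ₀), hD.hp1]
    · rw [mult_insert_of_not_subset]
      · exact hD.hother w' hw' hw'w hw'q
      · intro hc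
        rcases (hmemτ₀ w' hw').1 (hc (Finset.mem_insert_self _ _)) with rfl | rfl
        · exact hw'x rfl
        · exact hw'w rfl
  · rw [hlv, Finset.card_insert_of_notMem hxlv, Finset.filter_insert, if_pos hesubτ₀,
      Finset.card_insert_of_notMem (fun hc => hτ₀B (Finset.mem_filter.1 hc).1), hD.hcard]
  · intro y hy z hz
    rw [hlv] at hy hz
    have hmono : ∀ u v : Fin n, linkRel B e u v → linkRel (insert τ₀ B) e u v := by
      rintro u v ⟨h1, h2, h3, τ, hτ, hsub⟩
      exact ⟨h1, h2, h3, τ, Finset.mem_insert_of_mem hτ, hsub⟩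
    have reach_old : ∀ u ∈ linkV B e, ∀ v ∈ linkV B e,
        Relation.ReflTransGen (linkRel (insert τ₀ B) e) u v := by
      intro u hu v hv
      exact (hD.hconn u hu v hv).lift id hmono
    have reach_from_x : ∀ v, v ∈ insert x (linkV B e) →
        Relation.ReflTransGen (linkRel (insert τ₀ B) e) x v := by
      intro v hv
      rcases Finset.mem_insert.1 hv with h | h
      · rw [h]
      · exact (Relation.ReflTransGen.single hstepxw).trans (reach_old w hwlv v h)
    have reach_to_x : ∀ v, v ∈ insert x (linkV B e) →
        Relation.ReflTransGen (linkRel (insert τ₀ B) e) v x := by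
      intro v hv
      rcases Finset.mem_insert.1 hv with h | h
      · rw [h]
      · exact (reach_old v h w hwlv).trans
          (Relation.ReflTransGen.single (linkRel_symm hstepxw))
    exact (reach_to_x y hy).trans (reach_from_x z hz)

/-- The link of any edge of a stacked ball is a path. -/
lemma IsStackedBall.link {B : Finset (Finset (Fin n))} (hB : IsStackedBall B)
    {e : Finset (Fin n)} (he : e.card = 2) (hne : ∃ τ ∈ B, e ⊆ τ) :
    ∃ p q : Fin n, LinkData B e p q := by
  induction hB with
  | single t ht =>
      obtain ⟨τ, hτ, hesub⟩ := hne
      rw [Finset.mem_singleton] at hτ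
      subst hτ
      have hcd : (τ \ e).card = 2 := by
        rw [Finset.card_sdiff_of_subset hesub, ht, he]
      obtain ⟨p, q, hpq, hpqeq⟩ := Finset.card_eq_two.1 hcd
      exact ⟨p, q, single_tet_link (Finset.mem_singleton_self _)
        (fun τ' hτ' _ => Finset.mem_singleton.1 hτ') hesub hpqeq hpq⟩
  | glue B t x hB' ht hbdt hx ih =>
      obtain ⟨τ₁, hτ₁⟩ := Finset.card_pos.1 (by rw [hbdt]; norm_num)
      rw [Finset.mem_filter] at hτ₁
      have hxt : x ∉ t := fun hc => hx τ₁ hτ₁.1 (hτ₁.2 hc)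
      by_cases hesub : e ⊆ insert x t
      · by_cases hxe : x ∈ e
        · -- e contains the fresh vertex x : single tetrahedron case
          have hesubt : e \ {x} ⊆ t := by
            intro y hy
            rw [Finset.mem_sdiff, Finset.mem_singleton] at hy
            exact (Finset.mem_insert.1 (hesub hy.1)).resolve_left hy.2
          have hcard1 : (e \ {x}).card = 1 := by
            rw [Finset.sdiff_singleton_eq_erase, Finset.card_erase_of_mem hxe, he]
          obtain ⟨u, hu⟩ := Finset.card_eq_one.1 hcard1
          have hux : u ≠ x := by
            have : u ∈ e \ {x} := by rw [hu]; simp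
            simpa using (Finset.mem_sdiff.1 this).2
          have hut : u ∈ t := hesubt (by rw [hu]; simp)
          have hue : u ∈ e := by
            have : u ∈ e \ {x} := by rw [hu]; simp
            exact (Finset.mem_sdiff.1 this).1
          have heeq : e = {x, u} := by
            apply Finset.eq_of_subset_of_card_le
            · intro y hy
              by_cases hyx : y = x
              · simp [hyx]
              · have : y ∈ e \ {x} := Finset.mem_sdiff.2 ⟨hy, by simpa using hyx⟩
                rw [hu] at this
                simp only [Finset.mem_singleton] at this
                simp [this]
            · rw [he, Finset.card_insert_of_notMem (by simpa using hux.symm),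
                Finset.card_singleton]
          have hcd2 : (t.erase u).card = 2 := by
            rw [Finset.card_erase_of_mem hut, ht]
          obtain ⟨r, s, hrs, hrseq⟩ := Finset.card_eq_two.1 hcd2
          refine ⟨r, s, single_tet_link (Finset.mem_insert_self _ _) ?_ hesub ?_ hrs⟩
          · intro τ hτ hsubτ
            rcases Finset.mem_insert.1 hτ with rfl | hτ
            · rfl
            · exact absurd (hsubτ hxe) (hx τ hτ)
          · -- (insert x t) \ e = {r, s}
            have hrt : r ∈ t.erase u := by rw [hrseq]; simp
            have hst : s ∈ t.erase u := by rw [hrseq]; simp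
            rw [Finset.mem_erase] at hrt hst
            have hrx : r ≠ x := fun hc => hxt (hc ▸ hrt.2)
            have hsx : s ≠ x := fun hc => hxt (hc ▸ hst.2)
            have hteq : insert x t = insert x (insert u ({r, s} : Finset (Fin n))) := by
              rw [← hrseq, Finset.insert_erase hut]
            rw [hteq, heeq, Finset.insert_sdiff_of_mem _ (by simp),
              Finset.insert_sdiff_of_mem _ (by simp),
              Finset.sdiff_eq_self_iff_disjoint.2]
            rw [Finset.disjoint_left]
            intro a ha hae
            simp only [Finset.mem_insert, Finset.mem_singleton] at ha hae
            rcases ha with h1 | h1 <;> rcases hae with h2 | h2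
            · exact hrx (h1.symm.trans h2)
            · exact hrt.1 (h1.symm.trans h2)
            · exact hsx (h1.symm.trans h2)
            · exact hst.1 (h1.symm.trans h2)
        · -- e ⊆ t : extend the link data of B
          have hesubt : e ⊆ t := fun y hy =>
            (Finset.mem_insert.1 (hesub hy)).resolve_left (fun hc => hxe (hc ▸ hy))
          obtain ⟨p, q, hD⟩ := ih ⟨τ₁, hτ₁.1, hesubt.trans hτ₁.2⟩
          -- the third vertex w of t
          have hcd1 : (t \ e).card = 1 := by
            rw [Finset.card_sdiff_of_subset hesubt, ht, he]
          obtain ⟨w, hw⟩ := Finset.card_eq_one.1 hcd1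
          have hwt : w ∈ t := by
            have : w ∈ t \ e := by rw [hw]; simp
            exact (Finset.mem_sdiff.1 this).1
          have hwe : w ∉ e := by
            have : w ∈ t \ e := by rw [hw]; simp
            exact (Finset.mem_sdiff.1 this).2
          have hteq : t = insert w e := by
            apply Finset.eq_of_subset_of_card_le
            · intro y hy
              by_cases hye : y ∈ e
              · exact Finset.mem_insert_of_mem hye
              · have : y ∈ t \ e := Finset.mem_sdiff.2 ⟨hy, hye⟩
                rw [hw] at this
                simp only [Finset.mem_singleton] at this
                simp [this]
            · rw [ht, Finset.card_insert_of_notMem hwe, he]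
          -- w is an endpoint of the link of e in B
          have hmw : mult B (insert w e) = 1 := by
            unfold mult; rw [← hteq]; exact hbdt
          have hwpq : w = p ∨ w = q := by
            by_contra hc
            push_neg at hc
            rcases hD.hother w hwe hc.1 hc.2 with h0 | h2 <;> omega
          have hD' : ∃ q', LinkData B e w q' := by
            rcases hwpq with h | h
            · exact ⟨q, by rw [h]; exact hD⟩
            · exact ⟨p, by rw [h]; exact hD.swap⟩
          obtain ⟨q', hD'⟩ := hD'
          refine ⟨x, q', ?_⟩
          rw [hteq]
          exact LinkData.glue hx hwe ⟨τ₁, hτ₁.1, hteq ▸ hτ₁.2⟩ hD'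
      · have hne' : ∃ τ ∈ B, e ⊆ τ := by
          obtain ⟨τ, hτ, hsub⟩ := hne
          rcases Finset.mem_insert.1 hτ with rfl | hτ
          · exact absurd hsub hesub
          · exact ⟨τ, hτ, hsub⟩
        obtain ⟨p, q, hD⟩ := ih hne'
        exact ⟨p, q, hD.transfer hesub⟩

lemma mem_linkV {B : Finset (Finset (Fin n))} {e : Finset (Fin n)} {x : Fin n} :
    x ∈ linkV B e ↔ x ∉ e ∧ ∃ τ ∈ B, insert x e ⊆ τ := by
  simp [linkV]

lemma mult_one_unique {B : Finset (Finset (Fin n))} {s τ : Finset (Fin n)}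
    (h1 : mult B s = 1) (hτ : τ ∈ B) (hsub : s ⊆ τ) :
    ∀ τ' ∈ B, s ⊆ τ' → τ' = τ := by
  intro τ' hτ' hsub'
  have h := Finset.card_le_one.1 (le_of_eq h1)
  exact h _ (Finset.mem_filter.2 ⟨hτ', hsub'⟩) _ (Finset.mem_filter.2 ⟨hτ, hsub⟩)

lemma card3_distinct {a b c : Fin n} (h : ({a, b, c} : Finset (Fin n)).card = 3) :
    a ≠ b ∧ a ≠ c ∧ b ≠ c := by
  refine ⟨?_, ?_, ?_⟩
  · intro heq
    have hsub : ({a, b, c} : Finset (Fin n)) ⊆ {b, c} := by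
      intro z hz
      simp only [Finset.mem_insert, Finset.mem_singleton] at hz ⊢
      rcases hz with h1 | h1 | h1
      · exact Or.inl (h1.trans heq)
      · exact Or.inl h1
      · exact Or.inr h1
    have h2 : ({b, c} : Finset (Fin n)).card ≤ 2 := (Finset.card_insert_le _ _).trans (by simp)
    have := Finset.card_le_card hsub; omega
  · intro heq
    have hsub : ({a, b, c} : Finset (Fin n)) ⊆ {b, c} := by
      intro z hz
      simp only [Finset.mem_insert, Finset.mem_singleton] at hz ⊢
      rcases hz with h1 | h1 | h1
      · exact Or.inr (h1.trans heq)
      · exact Or.inl h1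
      · exact Or.inr h1
    have h2 : ({b, c} : Finset (Fin n)).card ≤ 2 := (Finset.card_insert_le _ _).trans (by simp)
    have := Finset.card_le_card hsub; omega
  · intro heq
    have hsub : ({a, b, c} : Finset (Fin n)) ⊆ {a, c} := by
      intro z hz
      simp only [Finset.mem_insert, Finset.mem_singleton] at hz ⊢
      rcases hz with h1 | h1 | h1
      · exact Or.inl h1
      · exact Or.inr (h1.trans heq)
      · exact Or.inr h1
    have h2 : ({a, c} : Finset (Fin n)).card ≤ 2 := (Finset.card_insert_le _ _).trans (by simp)
    have := Finset.card_le_card hsub; omega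

lemma pair_mem_other {s : Finset (Fin n)} {x y c : Fin n} (hxy : x ≠ y)
    (hs : s = {x, y}) (hc : c ∈ s) : ∃ m, m ≠ c ∧ s = {c, m} := by
  subst hs
  rcases Finset.mem_insert.1 hc with h | h
  · exact ⟨y, fun hyc => hxy ((hyc.trans h).symm), by rw [h]⟩
  · rw [Finset.mem_singleton] at h
    exact ⟨x, fun hxc => hxy (hxc.trans h), by rw [h, Finset.pair_comm]⟩

/-- An edge of a stacked ball `B` is an edge of the boundary sphere. -/
lemma hasEdge_iff {S : Sphere2 n} {B : Finset (Finset (Fin n))}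
    (hB : IsStackedBall B) (hbd : S.faces = bdry B) (u v : Fin n) :
    S.HasEdge u v ↔ u ≠ v ∧ ∃ τ ∈ B, u ∈ τ ∧ v ∈ τ := by
  constructor
  · rintro ⟨huv, hmem⟩
    refine ⟨huv, ?_⟩
    rw [Sphere2.edges, hbd, Finset.mem_biUnion] at hmem
    obtain ⟨s, hs, hmem⟩ := hmem
    rw [bdry, Finset.mem_filter, Finset.mem_biUnion] at hs
    obtain ⟨⟨τ, hτ, hsτ⟩, -⟩ := hs
    rw [Finset.mem_powersetCard] at hsτ hmem
    exact ⟨τ, hτ, hsτ.1 (hmem.1 (Finset.mem_insert_self _ _)),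
      hsτ.1 (hmem.1 (Finset.mem_insert_of_mem (Finset.mem_singleton_self _)))⟩
  · rintro ⟨huv, τ, hτ, hu, hv⟩
    have he2 : ({u, v} : Finset (Fin n)).card = 2 := by
      rw [Finset.card_insert_of_notMem (by simpa using huv), Finset.card_singleton]
    have hesub : ({u, v} : Finset (Fin n)) ⊆ τ :=
      Finset.insert_subset hu (Finset.singleton_subset_iff.2 hv)
    obtain ⟨p, q, hD⟩ := hB.link he2 ⟨τ, hτ, hesub⟩
    have hp1 : (B.filter fun τ'' => insert p {u, v} ⊆ τ'').card = 1 := hD.hp1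
    obtain ⟨τ', hτ'⟩ := Finset.card_pos.1 (by rw [hp1]; norm_num)
    rw [Finset.mem_filter] at hτ'
    refine ⟨huv, ?_⟩
    rw [Sphere2.edges, hbd, Finset.mem_biUnion]
    refine ⟨insert p {u, v}, ?_, ?_⟩
    · rw [bdry, Finset.mem_filter]
      refine ⟨Finset.mem_biUnion.2 ⟨τ', hτ'.1, Finset.mem_powersetCard.2 ⟨hτ'.2, ?_⟩⟩, hp1⟩
      rw [Finset.card_insert_of_notMem hD.hpe, he2]
    · rw [Finset.mem_powersetCard]
      exact ⟨Finset.subset_insert _ _, he2⟩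

/-- The link vertices of `ab` in `B` are the common neighbours of `a`, `b`
in the boundary sphere. -/
lemma linkV_eq_common {S : Sphere2 n} {B : Finset (Finset (Fin n))}
    (hB : IsStackedBall B) (hbd : S.faces = bdry B) {a b : Fin n}
    (hne : ∃ τ ∈ B, a ∈ τ ∧ b ∈ τ) :
    linkV B {a, b} = Finset.univ.filter fun x => S.HasEdge a x ∧ S.HasEdge b x := by
  ext x
  rw [mem_linkV, Finset.mem_filter]
  simp only [Finset.mem_univ, true_and, Finset.mem_insert, Finset.mem_singleton]
  constructor
  · rintro ⟨hx, τ, hτ, hsub⟩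
    push_neg at hx
    have hxmem : x ∈ τ := hsub (Finset.mem_insert_self _ _)
    have hamem : a ∈ τ := hsub (Finset.mem_insert_of_mem (Finset.mem_insert_self _ _))
    have hbmem : b ∈ τ :=
      hsub (Finset.mem_insert_of_mem (Finset.mem_insert_of_mem (Finset.mem_singleton_self _)))
    exact ⟨(hasEdge_iff hB hbd a x).2 ⟨Ne.symm hx.1, τ, hτ, hamem, hxmem⟩,
      (hasEdge_iff hB hbd b x).2 ⟨Ne.symm hx.2, τ, hτ, hbmem, hxmem⟩⟩
  · rintro ⟨hea, heb⟩
    obtain ⟨hax, τ₁, hτ₁, ha1, hx1⟩ := (hasEdge_iff hB hbd a x).1 hea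
    obtain ⟨hbx, τ₂, hτ₂, hb2, hx2⟩ := (hasEdge_iff hB hbd b x).1 heb
    obtain ⟨τ, hτ, haτ, hbτ, hxτ⟩ := hB.clique3 a b x hne ⟨τ₁, hτ₁, ha1, hx1⟩ ⟨τ₂, hτ₂, hb2, hx2⟩
    refine ⟨by push_neg; exact ⟨Ne.symm hax, Ne.symm hbx⟩, τ, hτ, ?_⟩
    exact Finset.insert_subset hxτ
      (Finset.insert_subset haτ (Finset.singleton_subset_iff.2 hbτ))

lemma triple_comm (a b x : Fin n) : ({a, b, x} : Finset (Fin n)) = insert x {a, b} := by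
  ext z; simp only [Finset.mem_insert, Finset.mem_singleton]; tauto

set_option maxHeartbeats 1000000 in
/-- If the edge `ab` lies in exactly two tetrahedra of `B`, then those are
`tα = abcm` and `tβ = abdm` for a common vertex `m`. -/
lemma stacked_two_tets {B : Finset (Finset (Fin n))} (hB : IsStackedBall B)
    {a b c d : Fin n} {tα tβ : Finset (Fin n)}
    (hab : a ≠ b) (hcd : c ≠ d)
    (hce : c ∉ ({a, b} : Finset (Fin n))) (hde : d ∉ ({a, b} : Finset (Fin n)))
    (htα : tα ∈ B) (htβ : tβ ∈ B)
    (hαsub : insert c ({a, b} : Finset (Fin n)) ⊆ tα)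
    (hβsub : insert d ({a, b} : Finset (Fin n)) ⊆ tβ)
    (hmultα : mult B (insert c ({a, b} : Finset (Fin n))) = 1)
    (hmultβ : mult B (insert d ({a, b} : Finset (Fin n))) = 1)
    (hk : (B.filter fun τ => ({a, b} : Finset (Fin n)) ⊆ τ).card = 2) :
    ∃ m : Fin n, m ∉ ({a, b} : Finset (Fin n)) ∧ m ≠ c ∧ m ≠ d ∧
      tα = insert c (insert m {a, b}) ∧ tβ = insert d (insert m {a, b}) ∧ tα ≠ tβ ∧
      (B.filter fun τ => ({a, b} : Finset (Fin n)) ⊆ τ) = {tα, tβ} ∧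
      linkV B {a, b} = {c, m, d} := by
  have he2 : ({a, b} : Finset (Fin n)).card = 2 := by
    rw [Finset.card_insert_of_notMem (by simpa using hab), Finset.card_singleton]
  have heα : ({a, b} : Finset (Fin n)) ⊆ tα := (Finset.subset_insert _ _).trans hαsub
  have heβ : ({a, b} : Finset (Fin n)) ⊆ tβ := (Finset.subset_insert _ _).trans hβsub
  obtain ⟨p, q, hD⟩ := hB.link he2 ⟨tα, htα, heα⟩
  have h4 := hB.card4
  have huniqα := mult_one_unique hmultα htα hαsub
  have huniqβ := mult_one_unique hmultβ htβ hβsub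
  have hclv : c ∈ linkV B {a, b} := mem_linkV.2 ⟨hce, tα, htα, hαsub⟩
  have hdlv : d ∈ linkV B {a, b} := mem_linkV.2 ⟨hde, tβ, htβ, hβsub⟩
  have hlvcard : (linkV B {a, b}).card = 3 := by rw [hD.hcard, hk]
  have htαβ : tα ≠ tβ := by
    intro hcontra
    obtain ⟨τ₁, hτ₁, τ₂, hτ₂, hττ⟩ := Finset.one_lt_card.1 (show 1 <
      (B.filter fun τ => ({a, b} : Finset (Fin n)) ⊆ τ).card by rw [hk]; norm_num)
    have hex : ∃ τ' ∈ B.filter (fun τ => ({a, b} : Finset (Fin n)) ⊆ τ), τ' ≠ tα := by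
      by_cases h1 : τ₁ = tα
      · exact ⟨τ₂, hτ₂, fun h => hττ (h1.trans h.symm)⟩
      · exact ⟨τ₁, hτ₁, h1⟩
    obtain ⟨τ', hτ'F, hτ'α⟩ := hex
    rw [Finset.mem_filter] at hτ'F
    have hcτ' : c ∉ τ' := fun hc => hτ'α (huniqα τ' hτ'F.1 (Finset.insert_subset hc hτ'F.2))
    have hdτ' : d ∉ τ' := by
      intro hc
      exact hτ'α ((huniqβ τ' hτ'F.1 (Finset.insert_subset hc hτ'F.2)).trans hcontra.symm)
    obtain ⟨x, y, hxy, hxyeq⟩ := Finset.card_eq_two.1 (show (τ' \ {a, b}).card = 2 by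
      rw [Finset.card_sdiff_of_subset hτ'F.2, h4 τ' hτ'F.1, he2])
    have hxmem : x ∈ τ' \ ({a, b} : Finset (Fin n)) := by rw [hxyeq]; simp
    have hymem : y ∈ τ' \ ({a, b} : Finset (Fin n)) := by rw [hxyeq]; simp
    rw [Finset.mem_sdiff] at hxmem hymem
    have hxlv : x ∈ linkV B {a, b} :=
      mem_linkV.2 ⟨hxmem.2, τ', hτ'F.1, Finset.insert_subset hxmem.1 hτ'F.2⟩
    have hylv : y ∈ linkV B {a, b} :=
      mem_linkV.2 ⟨hymem.2, τ', hτ'F.1, Finset.insert_subset hymem.1 hτ'F.2⟩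
    have hcx : c ≠ x := fun h => hcτ' (h.symm ▸ hxmem.1)
    have hcy : c ≠ y := fun h => hcτ' (h.symm ▸ hymem.1)
    have hdx : d ≠ x := fun h => hdτ' (h.symm ▸ hxmem.1)
    have hdy : d ≠ y := fun h => hdτ' (h.symm ▸ hymem.1)
    have hsub4 : ({c, d, x, y} : Finset (Fin n)) ⊆ linkV B {a, b} := by
      intro z hz
      simp only [Finset.mem_insert, Finset.mem_singleton] at hz
      rcases hz with rfl | rfl | rfl | rfl
      exacts [hclv, hdlv, hxlv, hylv]
    have hc4 : ({c, d, x, y} : Finset (Fin n)).card = 4 := by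
      rw [Finset.card_insert_of_notMem (by simp [hcd, hcx, hcy]),
        Finset.card_insert_of_notMem (by simp [hdx, hdy]),
        Finset.card_insert_of_notMem (by simpa using hxy), Finset.card_singleton]
    have := Finset.card_le_card hsub4
    omega
  have hc22 : ({tα, tβ} : Finset (Finset (Fin n))).card = 2 := by
    rw [Finset.card_insert_of_notMem (by simpa using htαβ), Finset.card_singleton]
  have hFeq : B.filter (fun τ => ({a, b} : Finset (Fin n)) ⊆ τ) = {tα, tβ} := by
    symm
    apply Finset.eq_of_subset_of_card_le
    · intro τ hτ
      rcases Finset.mem_insert.1 hτ with rfl | hτ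
      · exact Finset.mem_filter.2 ⟨htα, heα⟩
      · rw [Finset.mem_singleton] at hτ
        subst hτ
        exact Finset.mem_filter.2 ⟨htβ, heβ⟩
    · rw [hk, hc22]
  have hdα : d ∉ tα := fun hc => htαβ (huniqβ tα htα (Finset.insert_subset hc heα))
  have hcβ : c ∉ tβ := fun hc => htαβ ((huniqα tβ htβ (Finset.insert_subset hc heβ)).symm)
  -- the fourth vertices
  obtain ⟨x₁, y₁, hxy₁, heq₁⟩ := Finset.card_eq_two.1 (show (tα \ {a, b}).card = 2 by
    rw [Finset.card_sdiff_of_subset heα, h4 tα htα, he2])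
  have hcmem : c ∈ tα \ ({a, b} : Finset (Fin n)) :=
    Finset.mem_sdiff.2 ⟨hαsub (Finset.mem_insert_self _ _), hce⟩
  obtain ⟨m, hmc, hταe⟩ := pair_mem_other hxy₁ heq₁ hcmem
  obtain ⟨x₂, y₂, hxy₂, heq₂⟩ := Finset.card_eq_two.1 (show (tβ \ {a, b}).card = 2 by
    rw [Finset.card_sdiff_of_subset heβ, h4 tβ htβ, he2])
  have hdmem : d ∈ tβ \ ({a, b} : Finset (Fin n)) :=
    Finset.mem_sdiff.2 ⟨hβsub (Finset.mem_insert_self _ _), hde⟩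
  obtain ⟨m', hm'd, hτβe⟩ := pair_mem_other hxy₂ heq₂ hdmem
  have hmmem : m ∈ tα \ ({a, b} : Finset (Fin n)) := by rw [hταe]; simp
  have hm'mem : m' ∈ tβ \ ({a, b} : Finset (Fin n)) := by rw [hτβe]; simp
  rw [Finset.mem_sdiff] at hmmem hm'mem
  have hmd : m ≠ d := fun h => hdα (h ▸ hmmem.1)
  have hm'c : m' ≠ c := fun h => hcβ (h ▸ hm'mem.1)
  have htαeq : tα = insert c (insert m {a, b}) := by
    have h1 : insert c (insert m ({a, b} : Finset (Fin n))) =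
        ({a, b} : Finset (Fin n)) ∪ (tα \ {a, b}) := by
      rw [hταe]; ext z; simp only [Finset.mem_insert, Finset.mem_union,
        Finset.mem_singleton]; tauto
    rw [h1, Finset.union_sdiff_of_subset heα]
  have htβeq : tβ = insert d (insert m' {a, b}) := by
    have h1 : insert d (insert m' ({a, b} : Finset (Fin n))) =
        ({a, b} : Finset (Fin n)) ∪ (tβ \ {a, b}) := by
      rw [hτβe]; ext z; simp only [Finset.mem_insert, Finset.mem_union,
        Finset.mem_singleton]; tauto
    rw [h1, Finset.union_sdiff_of_subset heβ]
  have hlveq : linkV B {a, b} = (tα \ {a, b}) ∪ (tβ \ {a, b}) := by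
    ext z
    rw [mem_linkV, Finset.mem_union, Finset.mem_sdiff, Finset.mem_sdiff]
    constructor
    · rintro ⟨hz, τ, hτ, hsub⟩
      have hτF : τ ∈ B.filter (fun τ => ({a, b} : Finset (Fin n)) ⊆ τ) :=
        Finset.mem_filter.2 ⟨hτ, (Finset.subset_insert _ _).trans hsub⟩
      rw [hFeq] at hτF
      rcases Finset.mem_insert.1 hτF with h | h
      · exact Or.inl ⟨h ▸ hsub (Finset.mem_insert_self _ _), hz⟩
      · rw [Finset.mem_singleton] at h
        exact Or.inr ⟨h ▸ hsub (Finset.mem_insert_self _ _), hz⟩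
    · rintro (⟨hzτ, hz⟩ | ⟨hzτ, hz⟩)
      · exact ⟨hz, tα, htα, Finset.insert_subset hzτ heα⟩
      · exact ⟨hz, tβ, htβ, Finset.insert_subset hzτ heβ⟩
  have hmm' : m = m' := by
    by_contra hne'
    have hsub4 : ({c, d, m, m'} : Finset (Fin n)) ⊆ linkV B {a, b} := by
      intro z hz
      simp only [Finset.mem_insert, Finset.mem_singleton] at hz
      rcases hz with rfl | rfl | rfl | rfl
      · exact hclv
      · exact hdlv
      · rw [hlveq]; exact Finset.mem_union_left _ (Finset.mem_sdiff.2 hmmem)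
      · rw [hlveq]; exact Finset.mem_union_right _ (Finset.mem_sdiff.2 hm'mem)
    have hc4 : ({c, d, m, m'} : Finset (Fin n)).card = 4 := by
      rw [Finset.card_insert_of_notMem (by simp [hcd, Ne.symm hmc, Ne.symm hm'c]),
        Finset.card_insert_of_notMem (by simp [Ne.symm hmd, Ne.symm hm'd]),
        Finset.card_insert_of_notMem (by simpa using hne'), Finset.card_singleton]
    have := Finset.card_le_card hsub4
    omega
  subst hmm'
  refine ⟨m, hmmem.2, hmc, hmd, htαeq, htβeq, htαβ, hFeq, ?_⟩
  rw [hlveq, hταe, hτβe]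
  ext z
  simp only [Finset.mem_union, Finset.mem_insert, Finset.mem_singleton]
  tauto

set_option maxHeartbeats 1000000 in
/-- If `ᾱ` and `β̄` are adjacent in the dual graph, then `ab` lies in exactly
two tetrahedra. -/
lemma stacked_adj_card {B : Finset (Finset (Fin n))} (hB : IsStackedBall B)
    {a b c d : Fin n} {tα tβ : Finset (Fin n)}
    (hab : a ≠ b)
    (hce : c ∉ ({a, b} : Finset (Fin n))) (hde : d ∉ ({a, b} : Finset (Fin n)))
    (htα : tα ∈ B) (htβ : tβ ∈ B)
    (hαsub : insert c ({a, b} : Finset (Fin n)) ⊆ tα)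
    (hβsub : insert d ({a, b} : Finset (Fin n)) ⊆ tβ)
    (hmultα : mult B (insert c ({a, b} : Finset (Fin n))) = 1)
    (hmultβ : mult B (insert d ({a, b} : Finset (Fin n))) = 1)
    (hneq : tα ≠ tβ) (hcap : (tα ∩ tβ).card = 3) :
    (B.filter fun τ => ({a, b} : Finset (Fin n)) ⊆ τ).card = 2 := by
  have he2 : ({a, b} : Finset (Fin n)).card = 2 := by
    rw [Finset.card_insert_of_notMem (by simpa using hab), Finset.card_singleton]
  have heα : ({a, b} : Finset (Fin n)) ⊆ tα := (Finset.subset_insert _ _).trans hαsub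
  have heβ : ({a, b} : Finset (Fin n)) ⊆ tβ := (Finset.subset_insert _ _).trans hβsub
  have h4 := hB.card4
  have huniqα := mult_one_unique hmultα htα hαsub
  have huniqβ := mult_one_unique hmultβ htβ hβsub
  have hclv : c ∈ linkV B {a, b} := mem_linkV.2 ⟨hce, tα, htα, hαsub⟩
  have hecap : ({a, b} : Finset (Fin n)) ⊆ tα ∩ tβ := Finset.subset_inter heα heβ
  obtain ⟨m, hm⟩ := Finset.card_eq_one.1 (show ((tα ∩ tβ) \ {a, b}).card = 1 by
    rw [Finset.card_sdiff_of_subset hecap, hcap, he2])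
  have hmmem : m ∈ (tα ∩ tβ) \ ({a, b} : Finset (Fin n)) := by rw [hm]; simp
  rw [Finset.mem_sdiff, Finset.mem_inter] at hmmem
  obtain ⟨⟨hmα, hmβ⟩, hme⟩ := hmmem
  have hcβ : c ∉ tβ := fun hc => hneq ((huniqα tβ htβ (Finset.insert_subset hc heβ)).symm)
  have hdα : d ∉ tα := fun hc => hneq (huniqβ tα htα (Finset.insert_subset hc heα))
  have hmc : m ≠ c := fun h => hcβ (h ▸ hmβ)
  have hmd : m ≠ d := fun h => hdα (h ▸ hmα)
  have h3me : (insert m ({a, b} : Finset (Fin n))).card = 3 := by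
    rw [Finset.card_insert_of_notMem hme, he2]
  have hcnotm : c ∉ insert m ({a, b} : Finset (Fin n)) := by
    simp only [Finset.mem_insert, Finset.mem_singleton]
    push_neg
    refine ⟨Ne.symm hmc, ?_, ?_⟩
    · intro h; exact hce (by simp [h])
    · intro h; exact hce (by simp [h])
  have hdnotm : d ∉ insert m ({a, b} : Finset (Fin n)) := by
    simp only [Finset.mem_insert, Finset.mem_singleton]
    push_neg
    refine ⟨Ne.symm hmd, ?_, ?_⟩
    · intro h; exact hde (by simp [h])
    · intro h; exact hde (by simp [h])
  have hcard_cme : (insert c (insert m ({a, b} : Finset (Fin n)))).card = 4 := by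
    rw [Finset.card_insert_of_notMem hcnotm, h3me]
  have hcard_dme : (insert d (insert m ({a, b} : Finset (Fin n)))).card = 4 := by
    rw [Finset.card_insert_of_notMem hdnotm, h3me]
  have htαeq : tα = insert c (insert m {a, b}) := by
    symm
    apply Finset.eq_of_subset_of_card_le
    · exact Finset.insert_subset (hαsub (Finset.mem_insert_self _ _))
        (Finset.insert_subset hmα heα)
    · rw [h4 tα htα, hcard_cme]
  have htβeq : tβ = insert d (insert m {a, b}) := by
    symm
    apply Finset.eq_of_subset_of_card_le
    · exact Finset.insert_subset (hβsub (Finset.mem_insert_self _ _))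
        (Finset.insert_subset hmβ heβ)
    · rw [h4 tβ htβ, hcard_dme]
  obtain ⟨p, q, hD⟩ := hB.link he2 ⟨tα, htα, heα⟩
  have hc22 : ({tα, tβ} : Finset (Finset (Fin n))).card = 2 := by
    rw [Finset.card_insert_of_notMem (by simpa using hneq), Finset.card_singleton]
  have hsubmT : ({tα, tβ} : Finset (Finset (Fin n))) ⊆
      B.filter (fun τ => insert m ({a, b} : Finset (Fin n)) ⊆ τ) := by
    intro τ hτ
    rcases Finset.mem_insert.1 hτ with rfl | hτ
    · exact Finset.mem_filter.2 ⟨htα, Finset.insert_subset hmα heα⟩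
    · rw [Finset.mem_singleton] at hτ
      subst hτ
      exact Finset.mem_filter.2 ⟨htβ, Finset.insert_subset hmβ heβ⟩
  have hge2 : 2 ≤ mult B (insert m ({a, b} : Finset (Fin n))) := by
    have := Finset.card_le_card hsubmT
    rw [hc22] at this
    exact this
  have hmp : m ≠ p := by
    intro h
    have := hD.hp1
    rw [← h] at this
    omega
  have hmq : m ≠ q := by
    intro h
    have := hD.hq1
    rw [← h] at this
    omega
  have hm2 : mult B (insert m ({a, b} : Finset (Fin n))) = 2 := by
    rcases hD.hother m hme hmp hmq with h | h <;> omega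
  have hmT : B.filter (fun τ => insert m ({a, b} : Finset (Fin n)) ⊆ τ) = {tα, tβ} := by
    symm
    apply Finset.eq_of_subset_of_card_le hsubmT
    rw [hc22]
    exact le_of_eq hm2
  have hcT : B.filter (fun τ => insert c ({a, b} : Finset (Fin n)) ⊆ τ) = {tα} := by
    apply Finset.eq_singleton_iff_unique_mem.2
    refine ⟨Finset.mem_filter.2 ⟨htα, hαsub⟩, ?_⟩
    intro τ hτ
    rw [Finset.mem_filter] at hτ
    exact huniqα τ hτ.1 hτ.2
  have hdT : B.filter (fun τ => insert d ({a, b} : Finset (Fin n)) ⊆ τ) = {tβ} := by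
    apply Finset.eq_singleton_iff_unique_mem.2
    refine ⟨Finset.mem_filter.2 ⟨htβ, hβsub⟩, ?_⟩
    intro τ hτ
    rw [Finset.mem_filter] at hτ
    exact huniqβ τ hτ.1 hτ.2
  have hbound : ∀ z, Relation.ReflTransGen (linkRel B {a, b}) c z →
      z ∈ ({c, m, d} : Finset (Fin n)) := by
    intro z hz
    induction hz with
    | refl => simp
    | @tail u z h1 h2 ih =>
        obtain ⟨huz, hue, hze, τ, hτ, hsub⟩ := h2
        have hzτ : z ∈ τ := hsub (Finset.mem_insert_of_mem (Finset.mem_insert_self _ _))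
        have huτ : u ∈ τ := hsub (Finset.mem_insert_self _ _)
        have heτ : ({a, b} : Finset (Fin n)) ⊆ τ :=
          ((Finset.subset_insert _ _).trans (Finset.subset_insert _ _)).trans hsub
        simp only [Finset.mem_insert, Finset.mem_singleton] at ih ⊢
        rcases ih with h | h | h
        · -- u = c, so τ = tα
          have hτα : τ = tα := by
            have : τ ∈ B.filter (fun τ => insert c ({a, b} : Finset (Fin n)) ⊆ τ) :=
              Finset.mem_filter.2 ⟨hτ, Finset.insert_subset (h ▸ huτ) heτ⟩
            rw [hcT] at this
            exact Finset.mem_singleton.1 this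
          rw [hτα, htαeq] at hzτ
          simp only [Finset.mem_insert, Finset.mem_singleton] at hzτ
          rcases hzτ with h2 | h2 | h2
          · exact absurd (h.trans h2.symm) huz
          · exact Or.inr (Or.inl h2)
          · exact absurd (by simp [h2]) hze
        · -- u = m, so τ ∈ {tα, tβ}
          have hτm : τ ∈ B.filter (fun τ => insert m ({a, b} : Finset (Fin n)) ⊆ τ) :=
            Finset.mem_filter.2 ⟨hτ, Finset.insert_subset (h ▸ huτ) heτ⟩
          rw [hmT] at hτm
          rcases Finset.mem_insert.1 hτm with h3 | h3
          · rw [h3, htαeq] at hzτ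
            simp only [Finset.mem_insert, Finset.mem_singleton] at hzτ
            rcases hzτ with h2 | h2 | h2
            · exact Or.inl h2
            · exact absurd (h.trans h2.symm) huz
            · exact absurd (by simp [h2]) hze
          · rw [Finset.mem_singleton] at h3
            rw [h3, htβeq] at hzτ
            simp only [Finset.mem_insert, Finset.mem_singleton] at hzτ
            rcases hzτ with h2 | h2 | h2
            · exact Or.inr (Or.inr h2)
            · exact absurd (h.trans h2.symm) huz
            · exact absurd (by simp [h2]) hze
        · -- u = d, so τ = tβ
          have hτβ' : τ = tβ := by
            have : τ ∈ B.filter (fun τ => insert d ({a, b} : Finset (Fin n)) ⊆ τ) :=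
              Finset.mem_filter.2 ⟨hτ, Finset.insert_subset (h ▸ huτ) heτ⟩
            rw [hdT] at this
            exact Finset.mem_singleton.1 this
          rw [hτβ', htβeq] at hzτ
          simp only [Finset.mem_insert, Finset.mem_singleton] at hzτ
          rcases hzτ with h2 | h2 | h2
          · exact absurd (h.trans h2.symm) huz
          · exact Or.inr (Or.inl h2)
          · exact absurd (by simp [h2]) hze
  have hlvsub : linkV B {a, b} ⊆ {c, m, d} :=
    fun z hz => hbound z (hD.hconn c hclv z hz)
  have hle3 : ({c, m, d} : Finset (Fin n)).card ≤ 3 :=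
    le_trans (Finset.card_insert_le _ _)
      (by exact Nat.add_le_add_right ((Finset.card_insert_le _ _).trans (by simp)) 1)
  have hlv3 : (linkV B {a, b}).card ≤ 3 := (Finset.card_le_card hlvsub).trans hle3
  have hF2 : 2 ≤ (B.filter fun τ => ({a, b} : Finset (Fin n)) ⊆ τ).card := by
    have hsubF : ({tα, tβ} : Finset (Finset (Fin n))) ⊆
        B.filter (fun τ => ({a, b} : Finset (Fin n)) ⊆ τ) := by
      intro τ hτ
      rcases Finset.mem_insert.1 hτ with rfl | hτ
      · exact Finset.mem_filter.2 ⟨htα, heα⟩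
      · rw [Finset.mem_singleton] at hτ
        subst hτ
        exact Finset.mem_filter.2 ⟨htβ, heβ⟩
    have := Finset.card_le_card hsubF
    rw [hc22] at this
    exact this
  have := hD.hcard
  omega

set_option maxHeartbeats 2000000 in
/-- For triangles `α = abc`, `β = abd` of a stacked 2-sphere
`S`, the following are equivalent: (1) `ᾱ` and `β̄` are adjacent in `Λ(S̄)`;
(2) the link of `ab` in `S̄` is a path of length two from `c` to `d`;
(3) `ab` lies in exactly two tetrahedra of `S̄`; (4) `a` and `b` have exactly
three common neighbours in the edge graph of `S`; (5) there is a unique vertex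
`e ∉ {c, d}` with `ae` and `be` edges of `S`. -/
theorem flip_adjacency_tfae (n : ℕ) (S : Sphere2 n) (hS : IsStacked S)
    (a b c d : Fin n) (hcd : c ≠ d)
    (hα : ({a, b, c} : Finset (Fin n)) ∈ S.faces)
    (hβ : ({a, b, d} : Finset (Fin n)) ∈ S.faces)
    (B : Finset (Finset (Fin n))) (hB : IsStackedBall B)
    (hbd : S.faces = bdry B)
    (tα tβ : Finset (Fin n)) (htα : tα ∈ B) (htβ : tβ ∈ B)
    (hαsub : ({a, b, c} : Finset (Fin n)) ⊆ tα)
    (hβsub : ({a, b, d} : Finset (Fin n)) ⊆ tβ) :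
    [tα ≠ tβ ∧ (tα ∩ tβ).card = 3,
     ∃ e : Fin n, e ∉ ({a, b, c, d} : Finset (Fin n)) ∧
       ((Finset.univ : Finset (Fin n)).filter fun x : Fin n => x ≠ a ∧ x ≠ b ∧
           ∃ τ ∈ B, ({a, b, x} : Finset (Fin n)) ⊆ τ) = {c, e, d} ∧
       (((Finset.univ : Finset (Fin n)).powersetCard 2).filter fun p =>
           a ∉ p ∧ b ∉ p ∧ ∃ τ ∈ B, p ∪ {a, b} ⊆ τ) = {{c, e}, {e, d}},
     (B.filter fun τ => ({a, b} : Finset (Fin n)) ⊆ τ).card = 2,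
     ((Finset.univ : Finset (Fin n)).filter fun x : Fin n =>
         S.HasEdge a x ∧ S.HasEdge b x).card = 3,
     ∃! e : Fin n, e ≠ c ∧ e ≠ d ∧ S.HasEdge a e ∧ S.HasEdge b e].TFAE := by
  obtain ⟨hab, hac, hbc⟩ := card3_distinct (S.card_three _ hα)
  obtain ⟨-, had, hbd2⟩ := card3_distinct (S.card_three _ hβ)
  have hce : c ∉ ({a, b} : Finset (Fin n)) := by
    simp only [Finset.mem_insert, Finset.mem_singleton]
    push_neg
    exact ⟨Ne.symm hac, Ne.symm hbc⟩
  have hde : d ∉ ({a, b} : Finset (Fin n)) := by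
    simp only [Finset.mem_insert, Finset.mem_singleton]
    push_neg
    exact ⟨Ne.symm had, Ne.symm hbd2⟩
  have hinsc : ({a, b, c} : Finset (Fin n)) = insert c {a, b} := by
    ext z; simp only [Finset.mem_insert, Finset.mem_singleton]; tauto
  have hinsd : ({a, b, d} : Finset (Fin n)) = insert d {a, b} := by
    ext z; simp only [Finset.mem_insert, Finset.mem_singleton]; tauto
  have hαsub' : insert c ({a, b} : Finset (Fin n)) ⊆ tα := hinsc ▸ hαsub
  have hβsub' : insert d ({a, b} : Finset (Fin n)) ⊆ tβ := hinsd ▸ hβsub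
  have hmultα : mult B (insert c ({a, b} : Finset (Fin n))) = 1 := by
    have hmem : ({a, b, c} : Finset (Fin n)) ∈ bdry B := hbd ▸ hα
    rw [bdry, Finset.mem_filter] at hmem
    rw [← hinsc]
    exact hmem.2
  have hmultβ : mult B (insert d ({a, b} : Finset (Fin n))) = 1 := by
    have hmem : ({a, b, d} : Finset (Fin n)) ∈ bdry B := hbd ▸ hβ
    rw [bdry, Finset.mem_filter] at hmem
    rw [← hinsd]
    exact hmem.2
  have he2 : ({a, b} : Finset (Fin n)).card = 2 := by
    rw [Finset.card_insert_of_notMem (by simpa using hab), Finset.card_singleton]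
  have heα : ({a, b} : Finset (Fin n)) ⊆ tα := (Finset.subset_insert _ _).trans hαsub'
  have heβ : ({a, b} : Finset (Fin n)) ⊆ tβ := (Finset.subset_insert _ _).trans hβsub'
  obtain ⟨p, q, hD⟩ := hB.link he2 ⟨tα, htα, heα⟩
  have hane : ∃ τ ∈ B, a ∈ τ ∧ b ∈ τ := ⟨tα, htα, heα (Finset.mem_insert_self _ _),
    heα (Finset.mem_insert_of_mem (Finset.mem_singleton_self _))⟩
  have hlvCN := linkV_eq_common hB hbd hane
  have h43 : ((Finset.univ : Finset (Fin n)).filter fun x : Fin n =>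
        S.HasEdge a x ∧ S.HasEdge b x).card
      = (B.filter fun τ => ({a, b} : Finset (Fin n)) ⊆ τ).card + 1 := by
    rw [← hlvCN]; exact hD.hcard
  have hclv : c ∈ linkV B {a, b} := mem_linkV.2 ⟨hce, tα, htα, hαsub'⟩
  have hdlv : d ∈ linkV B {a, b} := mem_linkV.2 ⟨hde, tβ, htβ, hβsub'⟩
  tfae_have 1 → 3 := fun h =>
    stacked_adj_card hB hab hce hde htα htβ hαsub' hβsub' hmultα hmultβ h.1 h.2
  tfae_have 3 → 1 := by
    intro h3
    obtain ⟨m, hme, hmc, hmd, hταeq, hτβeq, hταβ, hFeq, hlv⟩ :=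
      stacked_two_tets hB hab hcd hce hde htα htβ hαsub' hβsub' hmultα hmultβ h3
    refine ⟨hταβ, ?_⟩
    have hcap : tα ∩ tβ = insert m ({a, b} : Finset (Fin n)) := by
      ext z
      rw [Finset.mem_inter, hταeq, hτβeq]
      simp only [Finset.mem_insert, Finset.mem_singleton]
      constructor
      · rintro ⟨h1 | h1, h2 | h2⟩
        · exact absurd (h1.symm.trans h2) hcd
        · exact h2
        · exact h1
        · exact h1
      · intro h
        exact ⟨Or.inr h, Or.inr h⟩
    rw [hcap, Finset.card_insert_of_notMem hme, he2]
  tfae_have 3 → 2 := by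
    intro h3
    obtain ⟨m, hme, hmc, hmd, hταeq, hτβeq, hταβ, hFeq, hlv⟩ :=
      stacked_two_tets hB hab hcd hce hde htα htβ hαsub' hβsub' hmultα hmultβ h3
    have hma : m ≠ a := fun h => hme (by simp [h])
    have hmb : m ≠ b := fun h => hme (by simp [h])
    have hsdc : insert c (insert m ({a, b} : Finset (Fin n))) \ {a, b} = {c, m} := by
      ext z
      rw [Finset.mem_sdiff]
      simp only [Finset.mem_insert, Finset.mem_singleton]
      constructor
      · rintro ⟨h1 | h1 | h1 | h1, h2⟩
        · exact Or.inl h1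
        · exact Or.inr h1
        · exact absurd (Or.inl h1) h2
        · exact absurd (Or.inr h1) h2
      · rintro (h1 | h1)
        · subst h1
          refine ⟨Or.inl rfl, ?_⟩
          simpa using hce
        · subst h1
          refine ⟨Or.inr (Or.inl rfl), ?_⟩
          simpa using hme
    have hsdd : insert d (insert m ({a, b} : Finset (Fin n))) \ {a, b} = {d, m} := by
      ext z
      rw [Finset.mem_sdiff]
      simp only [Finset.mem_insert, Finset.mem_singleton]
      constructor
      · rintro ⟨h1 | h1 | h1 | h1, h2⟩
        · exact Or.inl h1
        · exact Or.inr h1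
        · exact absurd (Or.inl h1) h2
        · exact absurd (Or.inr h1) h2
      · rintro (h1 | h1)
        · subst h1
          refine ⟨Or.inl rfl, ?_⟩
          simpa using hde
        · subst h1
          refine ⟨Or.inr (Or.inl rfl), ?_⟩
          simpa using hme
    refine ⟨m, ?_, ?_, ?_⟩
    · simp only [Finset.mem_insert, Finset.mem_singleton]
      push_neg
      exact ⟨hma, hmb, hmc, hmd⟩
    · rw [← hlv]
      ext z
      rw [Finset.mem_filter, mem_linkV]
      simp only [Finset.mem_univ, true_and]
      rw [triple_comm a b z]
      simp only [Finset.mem_insert, Finset.mem_singleton]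
      tauto
    · ext s
      simp only [Finset.mem_filter, Finset.mem_powersetCard, Finset.subset_univ, true_and,
        Finset.mem_insert, Finset.mem_singleton]
      constructor
      · rintro ⟨hs2, has, hbs, τ, hτ, hsub⟩
        have hdisj : Disjoint s ({a, b} : Finset (Fin n)) := by
          rw [Finset.disjoint_right]
          intro z hz hzs
          rcases Finset.mem_insert.1 hz with rfl | hz
          · exact has hzs
          · rw [Finset.mem_singleton] at hz; subst hz; exact hbs hzs
        have hcard4 : (s ∪ {a, b}).card = 4 := by
          rw [Finset.card_union_of_disjoint hdisj, hs2, he2]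
        have hτeq : τ = s ∪ {a, b} :=
          (Finset.eq_of_subset_of_card_le hsub (by rw [hcard4, hB.card4 τ hτ])).symm
        have hτF : τ ∈ B.filter (fun τ => ({a, b} : Finset (Fin n)) ⊆ τ) :=
          Finset.mem_filter.2 ⟨hτ, by rw [hτeq]; exact Finset.subset_union_right⟩
        rw [hFeq] at hτF
        have hseq : s = τ \ ({a, b} : Finset (Fin n)) := by
          rw [hτeq]
          ext z
          rw [Finset.mem_sdiff, Finset.mem_union]
          constructor
          · intro hz
            exact ⟨Or.inl hz, fun hze => (Finset.disjoint_left.1 hdisj hz) hze⟩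
          · rintro ⟨hz | hz, hze⟩
            · exact hz
            · exact absurd hz hze
        rcases Finset.mem_insert.1 hτF with h | h
        · left
          rw [hseq, h, hταeq, hsdc]
        · rw [Finset.mem_singleton] at h
          right
          rw [hseq, h, hτβeq, hsdd]
          exact Finset.pair_comm d m
      · rintro (rfl | rfl)
        · refine ⟨?_, ?_, ?_, tα, htα, ?_⟩
          · rw [Finset.card_insert_of_notMem (by simpa using Ne.symm hmc),
              Finset.card_singleton]
          · simp only [Finset.mem_insert, Finset.mem_singleton]
            push_neg
            exact ⟨hac, Ne.symm hma⟩
          · simp only [Finset.mem_insert, Finset.mem_singleton]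
            push_neg
            exact ⟨hbc, Ne.symm hmb⟩
          · rw [hταeq]
            intro z hz
            rw [Finset.mem_union] at hz
            simp only [Finset.mem_insert, Finset.mem_singleton] at hz ⊢
            tauto
        · refine ⟨?_, ?_, ?_, tβ, htβ, ?_⟩
          · rw [Finset.card_insert_of_notMem (by simpa using hmd), Finset.card_singleton]
          · simp only [Finset.mem_insert, Finset.mem_singleton]
            push_neg
            exact ⟨Ne.symm hma, had⟩
          · simp only [Finset.mem_insert, Finset.mem_singleton]
            push_neg
            exact ⟨Ne.symm hmb, hbd2⟩
          · rw [hτβeq]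
            intro z hz
            rw [Finset.mem_union] at hz
            simp only [Finset.mem_insert, Finset.mem_singleton] at hz ⊢
            tauto
  tfae_have 2 → 3 := by
    rintro ⟨m, hm4, hVeq, hPeq⟩
    simp only [Finset.mem_insert, Finset.mem_singleton] at hm4
    push_neg at hm4
    obtain ⟨hma, hmb, hmc, hmd⟩ := hm4
    have hmain : B.filter (fun τ => ({a, b} : Finset (Fin n)) ⊆ τ) =
        {({c, m} : Finset (Fin n)) ∪ {a, b}, ({m, d} : Finset (Fin n)) ∪ {a, b}} := by
      ext τ
      simp only [Finset.mem_filter, Finset.mem_insert, Finset.mem_singleton]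
      constructor
      · rintro ⟨hτ, hsub⟩
        have hsd : τ \ ({a, b} : Finset (Fin n)) ∈
            ((Finset.univ : Finset (Fin n)).powersetCard 2).filter (fun p =>
              a ∉ p ∧ b ∉ p ∧ ∃ τ' ∈ B, p ∪ {a, b} ⊆ τ') := by
          rw [Finset.mem_filter, Finset.mem_powersetCard]
          refine ⟨⟨Finset.subset_univ _, by rw [Finset.card_sdiff_of_subset hsub, hB.card4 τ hτ, he2]⟩,
            by simp, by simp, τ, hτ, ?_⟩
          rw [Finset.sdiff_union_of_subset hsub]
        rw [hPeq] at hsd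
        have hτeq : τ = τ \ ({a, b} : Finset (Fin n)) ∪ {a, b} :=
          (Finset.sdiff_union_of_subset hsub).symm
        rcases Finset.mem_insert.1 hsd with h | h
        · left; rw [hτeq, h]
        · right; rw [Finset.mem_singleton] at h; rw [hτeq, h]
      · have haux : ∀ p : Finset (Fin n),
            p ∈ ({({c, m} : Finset (Fin n)), {m, d}} : Finset (Finset (Fin n))) →
            p ∪ {a, b} ∈ B := by
          intro p hp
          rw [← hPeq, Finset.mem_filter, Finset.mem_powersetCard] at hp
          obtain ⟨⟨-, hp2⟩, hap, hbp, τ', hτ', hsub'⟩ := hp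
          have hdisj : Disjoint p ({a, b} : Finset (Fin n)) := by
            rw [Finset.disjoint_right]
            intro z hz hzs
            rcases Finset.mem_insert.1 hz with rfl | hz
            · exact hap hzs
            · rw [Finset.mem_singleton] at hz; subst hz; exact hbp hzs
          have hc4 : (p ∪ {a, b}).card = 4 := by
            rw [Finset.card_union_of_disjoint hdisj, hp2, he2]
          have hτ'eq : τ' = p ∪ {a, b} :=
            (Finset.eq_of_subset_of_card_le hsub' (by rw [hc4, hB.card4 τ' hτ'])).symm
          exact hτ'eq ▸ hτ'
        rintro (rfl | rfl)
        · exact ⟨haux _ (by simp), Finset.subset_union_right⟩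
        · exact ⟨haux _ (by simp), Finset.subset_union_right⟩
    have hne2 : ({c, m} : Finset (Fin n)) ∪ {a, b} ∉
        ({({m, d} : Finset (Fin n)) ∪ {a, b}} : Finset (Finset (Fin n))) := by
      rw [Finset.mem_singleton]
      intro hcmem
      have hcin : c ∈ ({m, d} : Finset (Fin n)) ∪ {a, b} := by
        rw [← hcmem]; simp
      simp only [Finset.mem_union, Finset.mem_insert, Finset.mem_singleton] at hcin
      rcases hcin with (h | h) | (h | h)
      · exact hmc h.symm
      · exact hcd h
      · exact hac h.symm
      · exact hbc h.symm
    rw [hmain, Finset.card_insert_of_notMem hne2, Finset.card_singleton]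
  tfae_have 3 → 4 := by
    intro h3
    rw [h43, h3]
  tfae_have 4 → 3 := by
    intro h4'
    rw [h43] at h4'
    omega
  tfae_have 3 → 5 := by
    intro h3
    obtain ⟨m, hme, hmc, hmd, hταeq, hτβeq, hταβ, hFeq, hlv⟩ :=
      stacked_two_tets hB hab hcd hce hde htα htβ hαsub' hβsub' hmultα hmultβ h3
    have hmlv : m ∈ linkV B {a, b} := by rw [hlv]; simp
    rw [hlvCN, Finset.mem_filter] at hmlv
    refine ⟨m, ⟨hmc, hmd, hmlv.2.1, hmlv.2.2⟩, ?_⟩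
    rintro y ⟨hyc, hyd, hya, hyb⟩
    have hylv : y ∈ linkV B {a, b} := by
      rw [hlvCN, Finset.mem_filter]
      exact ⟨Finset.mem_univ _, hya, hyb⟩
    rw [hlv] at hylv
    simp only [Finset.mem_insert, Finset.mem_singleton] at hylv
    rcases hylv with h | h | h
    · exact absurd h hyc
    · exact h
    · exact absurd h hyd
  tfae_have 5 → 3 := by
    rintro ⟨m, ⟨hmc, hmd, hea, heb⟩, huniq⟩
    have hmlv : m ∈ linkV B {a, b} := by
      rw [hlvCN, Finset.mem_filter]
      exact ⟨Finset.mem_univ _, hea, heb⟩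
    have hlveq : linkV B {a, b} = {c, m, d} := by
      apply Finset.Subset.antisymm
      · intro y hy
        simp only [Finset.mem_insert, Finset.mem_singleton]
        by_cases h1 : y = c
        · exact Or.inl h1
        by_cases h2 : y = d
        · exact Or.inr (Or.inr h2)
        have hy' := hy
        rw [hlvCN, Finset.mem_filter] at hy'
        exact Or.inr (Or.inl (huniq y ⟨h1, h2, hy'.2.1, hy'.2.2⟩))
      · intro y hy
        simp only [Finset.mem_insert, Finset.mem_singleton] at hy
        rcases hy with rfl | rfl | rfl
        exacts [hclv, hmlv, hdlv]
    have hccard : ({c, m, d} : Finset (Fin n)).card = 3 := by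
      rw [Finset.card_insert_of_notMem (by simp [Ne.symm hmc, hcd]),
        Finset.card_insert_of_notMem (by simpa using hmd), Finset.card_singleton]
    have hh := hD.hcard
    rw [hlveq, hccard] at hh
    omega
  tfae_finish

end PachnerSpheres
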